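/- Let X = ℂPⁿ with v_i = p_*(z_i ∂/∂z_i), W = span_ℂ{v_1,…,v_n}. For 1 ≤ k ≤ n, H^0(X, ∧^{k} 𝒯_X) = (H^0(X, ∧^{k−1} 𝒯_X) ∧ W) ⊕ (⊕_{I ∈ S(k)} ℂ χ^I · 𝒱_I), where S(k) is the set of all I ∈ M with ⟨I, e_i⟩ = m_i ≥ −1 for all 0 ≤ i ≤ n and |I| = k. -/

import Mathlib

/-!
Formalization of statements from "Poisson Cohomology of holomorphic toric Poisson
manifolds. I." (W. Hong).

Modeling conventions.  Mathlib has no holomorphic geometry of ℂPⁿ, so we use the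
standard faithful algebraic model: a holomorphic multivector field on a toric variety
is determined by its restriction to the dense open torus, where (in the invariant
frame and with Laurent-monomial coefficients) multivector fields form the algebra
`MV n = AddMonoidAlgebra (ExteriorAlgebra ℂ ℂⁿ) ℤⁿ`: the element `single I ω`
represents `χ^I ⊗ ω` (`χ^I` the Laurent monomial of weight `I`, `ω` a constant
multivector in the frame `v_1, …, v_n`, `v_i = ρ(e_i)`).  Multiplication is the
wedge product.  Similarly `AMV n` models multivector fields on ℂ^{n+1}∖{0} in the
frame `u_i = z_i ∂/∂z_i`.  Holomorphic multivector fields on ℂPⁿ are defined as the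
image under `p_*` of the k-vector fields on ℂ^{n+1} with homogeneous polynomial
coefficients of degree k (this is exactly the classical description of
`H⁰(ℂPⁿ, ∧ᵏ𝒯)`, due to Bondal).  The Schouten differential `d_π = [π,·]` of a
torus-invariant bivector `π = ρ(Π)` acts weightwise by
`[π, χ^I ⊗ ω] = χ^I ⊗ (ι(ι_I Π) ∧ ω)`.
-/

noncomputable section
open Finset

namespace CPn

variable (n : ℕ)

/-- Laurent multivector fields on the open torus (ℂ*)ⁿ ⊆ ℂPⁿ, in the invariant frame. -/
abbrev MV := AddMonoidAlgebra (ExteriorAlgebra ℂ (Fin n → ℂ)) (Fin n → ℤ)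

/-- Ambient model: multivector fields on ℂ^{n+1}∖{0} with Laurent-monomial
coefficients, in the frame u_i = z_i ∂/∂z_i. -/
abbrev AMV := AddMonoidAlgebra (ExteriorAlgebra ℂ (Fin (n+1) → ℂ)) (Fin (n+1) → ℤ)

/-- The Laurent monomial χ^I as a multivector field (of degree 0). -/
def χ (I : Fin n → ℤ) : MV n := AddMonoidAlgebra.single I 1

/-- The vectors e_0 = −(e_1+⋯+e_n), e_1, …, e_n in N_ℂ = ℂⁿ. -/
def EE : Fin (n+1) → (Fin n → ℂ) :=
  Fin.cases (fun _ => -1) (fun j => Pi.single j 1)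

/-- The holomorphic vector fields v_i = ρ(e_i) = p_*(z_i ∂/∂z_i), 0 ≤ i ≤ n. -/
def v (i : Fin (n+1)) : MV n :=
  AddMonoidAlgebra.single 0 (ExteriorAlgebra.ι ℂ (EE n i))

/-- W = span_ℂ{v_1,…,v_n} = ρ(N_ℂ). -/
def W : Submodule ℂ (MV n) :=
  Submodule.span ℂ {x | ∃ i : Fin (n+1), i ≠ 0 ∧ x = v n i}

/-- Extension of a weight I ∈ M ≅ ℤⁿ to (m_0, m_1, …, m_n), m_0 = −Σᵢ m_i, m_i = ⟨I,e_i⟩. -/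
def mext (I : Fin n → ℤ) : Fin (n+1) → ℤ :=
  Fin.cases (-(∑ j, I j)) I

/-- The set of indices 0 ≤ i ≤ n with m_i = −1. -/
def deg1Set (I : Fin n → ℤ) : Finset (Fin (n+1)) :=
  univ.filter fun i => mext n I i = -1

/-- |I| = number of entries of (m_0,…,m_n) equal to −1. -/
def wt (I : Fin n → ℤ) : ℕ := (deg1Set n I).card

/-- 𝒱_I = v_{i_1} ∧ ⋯ ∧ v_{i_l}, where m_{i_1},…,m_{i_l} are the entries equal to −1. -/
def VI (I : Fin n → ℤ) : MV n :=
  (((deg1Set n I).sort (· ≤ ·)).map (v n)).prod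

/-- χ^I · 𝒱_I. -/
def chiVI (I : Fin n → ℤ) : MV n := χ n I * VI n I

/-- ℰ_I = e_{i_1} ∧ ⋯ ∧ e_{i_l} ∈ ∧^l N_ℂ (inside the exterior algebra of N_ℂ). -/
def EI (I : Fin n → ℤ) : ExteriorAlgebra ℂ (Fin n → ℂ) :=
  (((deg1Set n I).sort (· ≤ ·)).map fun i => ExteriorAlgebra.ι ℂ (EE n i)).prod

/-- V_I^k = ℂ(χ^I·𝒱_I) ∧ W^{k−|I|}. -/
def VIk (I : Fin n → ℤ) (k : ℕ) : Submodule ℂ (MV n) :=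
  Submodule.span ℂ {chiVI n I} * (W n) ^ (k - wt n I)

/-- u_i = z_i ∂/∂z_i on ℂ^{n+1}. -/
def uu (i : Fin (n+1)) : AMV n :=
  AddMonoidAlgebra.single 0 (ExteriorAlgebra.ι ℂ (Pi.single i 1))

/-- The Euler vector field e⃗ = Σ_i z_i ∂/∂z_i. -/
def eulerA : AMV n := ∑ i, uu n i

/-- The derivative of p : ℂ^{n+1}∖{0} → ℂPⁿ on the invariant frame:
the frame vector of u_i is sent to e_i (so e_0 = −Σ e_j); in coordinates
w ↦ (w_j − w_0)_{1≤j≤n}. -/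
def q : (Fin (n+1) → ℂ) →ₗ[ℂ] (Fin n → ℂ) :=
  LinearMap.pi fun j =>
    (LinearMap.proj j.succ : (Fin (n+1) → ℂ) →ₗ[ℂ] ℂ) -
      (LinearMap.proj (0 : Fin (n+1)) : (Fin (n+1) → ℂ) →ₗ[ℂ] ℂ)

/-- Pushforward p_* along p : ℂ^{n+1}∖{0} → ℂPⁿ (on torus-invariant fields, i.e.
those of weight a with Σ a = 0, this is the honest pushforward; the weight a
corresponds to the monomial of weight (a_1,…,a_n) in the coordinates t_j = z_j/z_0). -/
def pstar : AMV n →ₗ[ℂ] MV n :=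
  (Finsupp.lsum ℂ fun a =>
    (AddMonoidAlgebra.lsingle (fun j : Fin n => a j.succ) :
        ExteriorAlgebra ℂ (Fin n → ℂ) →ₗ[ℂ] MV n) ∘ₗ
      (ExteriorAlgebra.map (q n)).toLinearMap) ∘ₗ
    (AddMonoidAlgebra.coeffLinearEquiv ℂ).toLinearMap

/-- u_{i_1} ∧ ⋯ ∧ u_{i_k} for T = {i_1 < ⋯ < i_k} (constant-coefficient part). -/
def wedgeT (T : Finset (Fin (n+1))) : ExteriorAlgebra ℂ (Fin (n+1) → ℂ) :=
  ((T.sort (· ≤ ·)).map fun i => ExteriorAlgebra.ι ℂ (Pi.single i 1)).prod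

/-- F̃_k: the k-vector fields on ℂ^{n+1} whose coefficients in the frame
∂_{i_1}∧⋯∧∂_{i_k} are homogeneous polynomials of degree k, restricted to the torus
(z^b ∂_T = z^{b−ε_T} u_T). -/
def Ftilde (k : ℕ) : Submodule ℂ (AMV n) :=
  Submodule.span ℂ
    { x | ∃ (b : Fin (n+1) → ℕ) (T : Finset (Fin (n+1))), T.card = k ∧ (∑ i, b i) = k ∧
        x = AddMonoidAlgebra.single (fun i => (b i : ℤ) - (if i ∈ T then 1 else 0)) (wedgeT n T) }

/-- H⁰(ℂPⁿ, ∧ᵏ𝒯) = p_*(F̃_k): holomorphic k-vector fields on ℂPⁿ. -/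
def H0 (k : ℕ) : Submodule ℂ (MV n) := Submodule.map (pstar n) (Ftilde n k)

/-- ι_I Π ∈ N_ℂ for Π = Σ_{i<j} a i j · e_i∧e_j, where
ι_I (e_i∧e_j) = ⟨I,e_i⟩e_j − ⟨I,e_j⟩e_i. -/
def contr (a : Fin n → Fin n → ℂ) (I : Fin n → ℤ) : Fin n → ℂ := fun j =>
  ∑ p ∈ univ.filter (fun p : Fin n × Fin n => p.1 < p.2),
    a p.1 p.2 * ((I p.1 : ℂ) * (if p.2 = j then 1 else 0) -
      (I p.2 : ℂ) * (if p.1 = j then 1 else 0))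

/-- The toric bivector field π = Σ_{1≤i<j≤n} a i j · v_i ∧ v_j. -/
def piT (a : Fin n → Fin n → ℂ) : MV n :=
  ∑ p ∈ univ.filter (fun p : Fin n × Fin n => p.1 < p.2),
    a p.1 p.2 • (v n p.1.succ * v n p.2.succ)

/-- The Poisson differential d_π = [π, ·] (Schouten bracket with π = ρ(Π)):
on the toric frame it is given weightwise by [π, χ^I ⊗ ω] = χ^I ⊗ (ι(ι_I Π) ∧ ω). -/
def dPi (a : Fin n → Fin n → ℂ) : MV n →ₗ[ℂ] MV n :=
  (Finsupp.lsum ℂ fun I =>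
    (AddMonoidAlgebra.lsingle I : ExteriorAlgebra ℂ (Fin n → ℂ) →ₗ[ℂ] MV n) ∘ₗ
      LinearMap.mulLeft ℂ (ExteriorAlgebra.ι ℂ (contr n a I))) ∘ₗ
    (AddMonoidAlgebra.coeffLinearEquiv ℂ).toLinearMap

/-- S_k : weights I with all m_i ≥ −1 (0 ≤ i ≤ n) and |I| ≤ k. -/
def Sk (k : ℕ) : Set (Fin n → ℤ) := {I | (∀ i, -1 ≤ mext n I i) ∧ wt n I ≤ k}

/-- S(k) : weights I with all m_i ≥ −1 (0 ≤ i ≤ n) and |I| = k. -/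
def Slevel (k : ℕ) : Set (Fin n → ℤ) := {I | (∀ i, -1 ≤ mext n I i) ∧ wt n I = k}

/-- S_k(π) : I ∈ S_k satisfying (ι_I Π) ∧ ℰ_I = 0. -/
def SkPi (a : Fin n → Fin n → ℂ) (k : ℕ) : Set (Fin n → ℤ) :=
  {I | I ∈ Sk n k ∧ ExteriorAlgebra.ι ℂ (contr n a I) * EI n I = 0}

/-- S(k,π) : I with |I| = k, all m_i ≥ −1, satisfying (ι_I Π) ∧ ℰ_I = 0. -/
def SlevelPi (a : Fin n → Fin n → ℂ) (k : ℕ) : Set (Fin n → ℤ) :=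
  {I | I ∈ Slevel n k ∧ ExteriorAlgebra.ι ℂ (contr n a I) * EI n I = 0}

/-- Poisson cocycles in degree k: holomorphic k-vector fields killed by d_π. -/
def cocycles (a : Fin n → Fin n → ℂ) (k : ℕ) : Submodule ℂ (MV n) :=
  H0 n k ⊓ LinearMap.ker (dPi n a)

/-- Poisson coboundaries in degree k: d_π of the holomorphic (k−1)-vector fields. -/
def cobound (a : Fin n → Fin n → ℂ) : ℕ → Submodule ℂ (MV n)
  | 0 => ⊥
  | (k+1) => Submodule.map (dPi n a) (H0 n k)

/-- The coefficient matrix of the standard Poisson structure π_st = Σ_{1≤i<j≤n} v_i∧v_j. -/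
def aST : Fin n → Fin n → ℂ := fun _ _ => 1

/-! ### Auxiliary lemmas -/

section Aux

variable (n : ℕ)

/-- The frame vector ι(e_i) in the exterior algebra of N_ℂ. -/
def fι (i : Fin (n+1)) : ExteriorAlgebra ℂ (Fin n → ℂ) := ExteriorAlgebra.ι ℂ (EE n i)

/-- Wedge of the frame vectors over a finset of indices. -/
def wEI (T : Finset (Fin (n+1))) : ExteriorAlgebra ℂ (Fin n → ℂ) :=
  ((T.sort (· ≤ ·)).map (fι n)).prod

lemma fι_anticomm (i j : Fin (n+1)) : fι n i * fι n j = -(fι n j * fι n i) :=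
  eq_neg_of_add_eq_zero_left (ExteriorAlgebra.ι_add_mul_swap _ _)

lemma fι_sq (i : Fin (n+1)) : fι n i * fι n i = 0 := ExteriorAlgebra.ι_sq_zero _

lemma mul_prod_swap (i : Fin (n+1)) (l : List (Fin (n+1))) :
    fι n i * (l.map (fι n)).prod = (l.map (fι n)).prod * fι n i ∨
    fι n i * (l.map (fι n)).prod = -((l.map (fι n)).prod * fι n i) := by
  induction l with
  | nil => left; simp
  | cons a t ih =>
    have key : fι n i * ((a :: t).map (fι n)).prod
        = -(fι n a * (fι n i * (t.map (fι n)).prod)) := by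
      simp only [List.map_cons, List.prod_cons, ← mul_assoc, fι_anticomm n i a, neg_mul]
    rcases ih with h | h
    · right
      rw [key, h, List.map_cons, List.prod_cons, mul_assoc]
    · left
      rw [key, h, List.map_cons, List.prod_cons, mul_neg, neg_neg, mul_assoc]

lemma prod_list_erase (i : Fin (n+1)) (l : List (Fin (n+1))) (hi : i ∈ l) :
    (l.map (fι n)).prod = ((l.erase i).map (fι n)).prod * fι n i ∨
    (l.map (fι n)).prod = -(((l.erase i).map (fι n)).prod * fι n i) := by
  induction l with
  | nil => simp at hi
  | cons a t ih =>
    by_cases hai : a = i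
    · subst hai
      rw [List.erase_cons_head, List.map_cons, List.prod_cons]
      rcases mul_prod_swap n a t with h | h
      · left; exact h
      · right; exact h
    · rw [List.erase_cons_tail (by simpa using hai)]
      have hit : i ∈ t := by
        rcases List.mem_cons.1 hi with h | h
        · exact absurd h.symm hai
        · exact h
      rcases ih hit with h | h
      · left
        rw [List.map_cons, List.prod_cons, h, List.map_cons, List.prod_cons, mul_assoc]
      · right
        rw [List.map_cons, List.prod_cons, h, List.map_cons, List.prod_cons, mul_neg,
          mul_assoc]

lemma sort_erase (T : Finset (Fin (n+1))) (i : Fin (n+1)) :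
    (T.sort (· ≤ ·)).erase i = (T.erase i).sort (· ≤ ·) := by
  haveI : Std.Antisymm (fun a b : Fin (n+1) => a ≤ b) := ⟨fun _ _ h h' => le_antisymm h h'⟩
  refine (fun hp h1 h2 => List.Perm.eq_of_pairwise' (r := fun a b => a ≤ b) h1 h2 hp) ?_ ?_ ?_
  · rw [← Multiset.coe_eq_coe, ← Multiset.coe_erase, Finset.sort_eq, Finset.sort_eq,
      Finset.erase_val]
  · exact (Finset.pairwise_sort _ _).sublist List.erase_sublist
  · exact Finset.pairwise_sort _ _

lemma wEI_erase (T : Finset (Fin (n+1))) (i : Fin (n+1)) (hi : i ∈ T) :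
    wEI n T = wEI n (T.erase i) * fι n i ∨
    wEI n T = -(wEI n (T.erase i) * fι n i) := by
  have := prod_list_erase n i (T.sort (· ≤ ·)) ((Finset.mem_sort _).2 hi)
  rwa [sort_erase] at this

lemma wEI_insert (S : Finset (Fin (n+1))) (i : Fin (n+1)) (hi : i ∉ S) :
    wEI n S * fι n i = wEI n (insert i S) ∨
    wEI n S * fι n i = -(wEI n (insert i S)) := by
  rcases wEI_erase n (insert i S) i (Finset.mem_insert_self i S) with h | h
  · left; rw [h, Finset.erase_insert hi]
  · right
    rw [Finset.erase_insert hi] at h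
    rw [h, neg_neg]

lemma wEI_mul_self (S : Finset (Fin (n+1))) (i : Fin (n+1)) (hi : i ∈ S) :
    wEI n S * fι n i = 0 := by
  rcases wEI_erase n S i hi with h | h <;>
    rw [h] <;> simp [mul_assoc, fι_sq]

lemma v_def' (i : Fin (n+1)) : v n i = AddMonoidAlgebra.single 0 (fι n i) := rfl

lemma single_mul_single' (I J : Fin n → ℤ) (x y : ExteriorAlgebra ℂ (Fin n → ℂ)) :
    HMul.hMul (α := MV n) (β := MV n) (γ := MV n) (AddMonoidAlgebra.single I x) (AddMonoidAlgebra.single J y)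
      = AddMonoidAlgebra.single (I + J) (x * y) :=
  AddMonoidAlgebra.single_mul_single _ _ _ _

lemma prod_v (l : List (Fin (n+1))) :
    (l.map (v n)).prod = (AddMonoidAlgebra.single 0 ((l.map (fι n)).prod) : MV n) := by
  induction l with
  | nil =>
    simp only [List.map_nil, List.prod_nil]
    exact AddMonoidAlgebra.one_def
  | cons a t ih =>
    rw [List.map_cons, List.prod_cons, ih, v_def', List.map_cons, List.prod_cons,
      single_mul_single', add_zero]

lemma EI_eq (I : Fin n → ℤ) : EI n I = wEI n (deg1Set n I) := rfl

lemma chiVI_eq (I : Fin n → ℤ) :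
    chiVI n I = AddMonoidAlgebra.single I (wEI n (deg1Set n I)) := by
  rw [chiVI, VI, prod_v, χ, single_mul_single', add_zero, one_mul]
  rfl

end Aux
section Aux2

variable (n : ℕ)

lemma mext_succ (I : Fin n → ℤ) (j : Fin n) : mext n I j.succ = I j := by
  simp [mext]

lemma mext_zero (I : Fin n → ℤ) : mext n I 0 = -(∑ j, I j) := rfl

lemma sum_mext (I : Fin n → ℤ) : ∑ i, mext n I i = 0 := by
  rw [Fin.sum_univ_succ, mext_zero]
  simp [mext_succ]

lemma mem_deg1Set (I : Fin n → ℤ) (i : Fin (n+1)) :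
    i ∈ deg1Set n I ↔ mext n I i = -1 := by
  simp [deg1Set]

lemma sum_ind (T : Finset (Fin (n+1))) :
    ∑ i, (if i ∈ T then (1 : ℤ) else 0) = T.card := by
  simp [Finset.sum_ite_mem]

lemma q_single (i : Fin (n+1)) : q n (Pi.single i 1) = EE n i := by
  funext j
  induction i using Fin.cases with
  | zero =>
    simp [q, EE, Pi.single_apply, (Fin.succ_ne_zero j).symm]
  | succ s =>
    simp [q, EE, Pi.single_apply, Fin.succ_inj, (Fin.succ_ne_zero s).symm]

lemma pstar_single (a : Fin (n+1) → ℤ) (ω : ExteriorAlgebra ℂ (Fin (n+1) → ℂ)) :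
    pstar n (AddMonoidAlgebra.single a ω)
      = AddMonoidAlgebra.single (fun j => a j.succ) (ExteriorAlgebra.map (q n) ω) := by
  rw [pstar, LinearMap.comp_apply]
  erw [Finsupp.lsum_single]
  rfl

lemma map_wedgeT (T : Finset (Fin (n+1))) :
    ExteriorAlgebra.map (q n) (wedgeT n T) = wEI n T := by
  rw [wedgeT, wEI, map_list_prod, List.map_map]
  congr 1
  apply List.map_congr_left
  intro i _
  simp only [Function.comp_apply, ExteriorAlgebra.map_apply_ι, q_single, fι]

/-- The natural spanning set of `H0 n k`. -/
def gens (k : ℕ) : Set (MV n) :=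
  {x | ∃ (I : Fin n → ℤ) (T : Finset (Fin (n+1))), (∀ i, -1 ≤ mext n I i) ∧ T.card = k ∧
    deg1Set n I ⊆ T ∧ x = AddMonoidAlgebra.single I (wEI n T)}

lemma mext_eq (b : Fin (n+1) → ℕ) (T : Finset (Fin (n+1))) (hb : ∑ i, b i = T.card)
    (i : Fin (n+1)) :
    mext n (fun j => (b j.succ : ℤ) - (if j.succ ∈ T then 1 else 0)) i
      = (b i : ℤ) - (if i ∈ T then 1 else 0) := by
  induction i using Fin.cases with
  | zero =>
    rw [mext_zero]
    have h1 : (b 0 : ℤ) + ∑ j : Fin n, (b j.succ : ℤ) = (T.card : ℤ) := by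
      have := hb
      rw [Fin.sum_univ_succ] at this
      exact_mod_cast congrArg (Nat.cast : ℕ → ℤ) this
    have h2 : (if (0 : Fin (n+1)) ∈ T then (1:ℤ) else 0)
        + ∑ j : Fin n, (if j.succ ∈ T then (1:ℤ) else 0) = (T.card : ℤ) := by
      rw [← Fin.sum_univ_succ (f := fun i => if i ∈ T then (1:ℤ) else 0)]
      exact sum_ind n T
    rw [Finset.sum_sub_distrib]
    omega
  | succ j => rw [mext_succ]

lemma H0_eq (k : ℕ) : H0 n k = Submodule.span ℂ (gens n k) := by
  rw [H0, Ftilde, Submodule.map_span]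
  congr 1
  ext x
  constructor
  · rintro ⟨y, ⟨b, T, hT, hb, rfl⟩, rfl⟩
    rw [pstar_single, map_wedgeT]
    have hm := mext_eq n b T (by rw [hb, hT])
    refine ⟨_, T, fun i => ?_, hT, fun i hi => ?_, rfl⟩
    · rw [hm i]; split_ifs <;> omega
    · rw [mem_deg1Set, hm i] at hi
      by_contra hiT
      rw [if_neg hiT] at hi
      omega
  · rintro ⟨I, T, hm, hT, hsub, rfl⟩
    set b : Fin (n+1) → ℕ := fun i => (mext n I i + if i ∈ T then 1 else 0).toNat with hbdef
    have hbz : ∀ i, (b i : ℤ) = mext n I i + if i ∈ T then 1 else 0 := by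
      intro i
      have h1 := hm i
      by_cases h : i ∈ T
      · simp only [hbdef, if_pos h]
        omega
      · have hne : mext n I i ≠ -1 := fun h' => h (hsub ((mem_deg1Set n I i).2 h'))
        simp only [hbdef, if_neg h]
        omega
    have hbsum : ∑ i, b i = k := by
      have : ((∑ i, b i : ℕ) : ℤ) = (k : ℤ) := by
        rw [Nat.cast_sum]
        calc ∑ i, (b i : ℤ) = ∑ i, (mext n I i + if i ∈ T then 1 else 0) := by
              exact Finset.sum_congr rfl fun i _ => hbz i
          _ = (∑ i, mext n I i) + ∑ i, (if i ∈ T then (1:ℤ) else 0) := Finset.sum_add_distrib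
          _ = 0 + T.card := by rw [sum_mext, sum_ind]
          _ = (k : ℤ) := by rw [zero_add, hT]
      exact_mod_cast this
    refine ⟨AddMonoidAlgebra.single (fun i => (b i : ℤ) - if i ∈ T then 1 else 0) (wedgeT n T),
      ⟨b, T, hT, hbsum, rfl⟩, ?_⟩
    rw [pstar_single, map_wedgeT]
    congr 1
    funext j
    rw [hbz j.succ, ← mext_succ n I j]
    ring

lemma v_mem_W (i : Fin (n+1)) : v n i ∈ W n := by
  by_cases h : i = 0
  · subst h
    have hEE : EE n 0 = -(∑ j : Fin n, EE n j.succ) := by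
      funext x
      simp [EE, Finset.sum_apply, Pi.single_apply]
    have hv0 : v n 0 = -(∑ j : Fin n, v n j.succ) := by
      simp only [v_def', fι, hEE, map_neg, map_sum, AddMonoidAlgebra.single_neg]
      congr 1
      exact map_sum (AddMonoidAlgebra.singleAddHom _) _ _
    rw [hv0]
    exact neg_mem (Submodule.sum_mem _ fun j _ =>
      Submodule.subset_span ⟨j.succ, Fin.succ_ne_zero j, rfl⟩)
  · exact Submodule.subset_span ⟨i, h, rfl⟩

lemma disjoint_supported_supported' {s t : Set (Fin n → ℤ)} (h : Disjoint s t) :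
    Disjoint (AddMonoidAlgebra.supported ℂ (ExteriorAlgebra ℂ (Fin n → ℂ)) s)
      (AddMonoidAlgebra.supported ℂ (ExteriorAlgebra ℂ (Fin n → ℂ)) t) := by
  rw [Submodule.disjoint_def]
  intro x hx hy
  have := Submodule.disjoint_def.1
    (Finsupp.disjoint_supported_supported (M := ExteriorAlgebra ℂ (Fin n → ℂ)) (R := ℂ) h)
    x.coeff hx hy
  rw [← AddMonoidAlgebra.ofCoeff_coeff x, this]
  rfl

lemma single_mem_supported' {s : Set (Fin n → ℤ)} {I : Fin n → ℤ}
    (x : ExteriorAlgebra ℂ (Fin n → ℂ)) (h : I ∈ s) :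
    (AddMonoidAlgebra.single I x : MV n) ∈
      AddMonoidAlgebra.supported ℂ (ExteriorAlgebra ℂ (Fin n → ℂ)) s :=
  Finsupp.single_mem_supported ℂ x h

end Aux2
/-- For 1 ≤ k ≤ n,
H⁰(X, ∧ᵏ𝒯) = (H⁰(X, ∧^{k−1}𝒯) ∧ W) ⊕ (⊕_{I ∈ S(k)} ℂ χ^I·𝒱_I). -/
theorem multivector_fields_recursive_decomposition (n k : ℕ) (hk1 : 1 ≤ k) (hk2 : k ≤ n) :
    H0 n k = (H0 n (k-1) * W n) ⊔ (⨆ I ∈ Slevel n k, Submodule.span ℂ {chiVI n I}) ∧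
    Disjoint (H0 n (k-1) * W n) (⨆ I ∈ Slevel n k, Submodule.span ℂ {chiVI n I}) ∧
    iSupIndep (fun I : (Slevel n k) => Submodule.span ℂ {chiVI n (I : Fin n → ℤ)}) := by
  refine ⟨?_, ?_, ?_⟩
  · -- equality
    apply le_antisymm
    · rw [H0_eq]
      apply Submodule.span_le.2
      rintro x ⟨I, T, hm, hT, hsub, rfl⟩
      by_cases hD : deg1Set n I = T
      · apply Submodule.mem_sup_right
        have hI : I ∈ Slevel n k := ⟨hm, by rw [wt, ← hT, hD]⟩
        have hx : (AddMonoidAlgebra.single I (wEI n T) : MV n) = chiVI n I := by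
          rw [chiVI_eq, hD]
        rw [hx]
        exact le_iSup₂ (f := fun I (_ : I ∈ Slevel n k) => Submodule.span ℂ {chiVI n I}) I hI
          (Submodule.mem_span_singleton_self _)
      · have hss : deg1Set n I ⊂ T := ⟨hsub, fun h => hD (subset_antisymm hsub h)⟩
        obtain ⟨i, hiT, hiD⟩ := Finset.exists_of_ssubset hss
        apply Submodule.mem_sup_left
        have hy : (AddMonoidAlgebra.single I (wEI n (T.erase i)) : MV n) ∈ H0 n (k-1) := by
          rw [H0_eq]
          exact Submodule.subset_span ⟨I, T.erase i, hm,
            by rw [Finset.card_erase_of_mem hiT, hT],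
            fun j hj => Finset.mem_erase.2 ⟨fun h => hiD (h ▸ hj), hsub hj⟩, rfl⟩
        have hmem : HMul.hMul (α := MV n) (β := MV n) (γ := MV n)
            (AddMonoidAlgebra.single I (wEI n (T.erase i))) (v n i) ∈ H0 n (k-1) * W n :=
          Submodule.mul_mem_mul hy (v_mem_W n i)
        have hprod : HMul.hMul (α := MV n) (β := MV n) (γ := MV n)
            (AddMonoidAlgebra.single I (wEI n (T.erase i))) (v n i)
            = AddMonoidAlgebra.single I (wEI n (T.erase i) * fι n i) := by
          rw [v_def', single_mul_single', add_zero]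
        rw [hprod] at hmem
        rcases wEI_erase n T i hiT with h | h
        · rw [h]; exact hmem
        · rw [h, AddMonoidAlgebra.single_neg]; exact neg_mem hmem
    · apply sup_le
      · rw [H0_eq n (k-1), W, Submodule.span_mul_span, H0_eq n k]
        apply Submodule.span_le.2
        rintro x hx
        obtain ⟨g, hg, w, hw, rfl⟩ := Set.mem_mul.1 hx
        obtain ⟨J, S, hm, hS, hsub, rfl⟩ := hg
        obtain ⟨i, hi0, rfl⟩ := hw
        rw [v_def', single_mul_single', add_zero]
        by_cases hiS : i ∈ S
        · rw [wEI_mul_self n S i hiS, AddMonoidAlgebra.single_zero]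
          exact Submodule.zero_mem _
        · have hgen : (AddMonoidAlgebra.single J (wEI n (insert i S)) : MV n) ∈
              Submodule.span ℂ (gens n k) :=
            Submodule.subset_span ⟨J, insert i S, hm,
              by rw [Finset.card_insert_of_notMem hiS, hS]; omega,
              hsub.trans (Finset.subset_insert _ _), rfl⟩
          rcases wEI_insert n S i hiS with h | h
          · rw [h]; exact hgen
          · rw [h, AddMonoidAlgebra.single_neg]; exact neg_mem hgen
      · refine iSup₂_le fun I hI => ?_
        rw [Submodule.span_le, H0_eq]
        refine Set.singleton_subset_iff.2 (Submodule.subset_span ⟨I, deg1Set n I, hI.1, hI.2,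
          subset_rfl, chiVI_eq n I⟩)
  · -- disjointness
    have h1 : H0 n (k-1) * W n
        ≤ AddMonoidAlgebra.supported ℂ (ExteriorAlgebra ℂ (Fin n → ℂ)) {I : Fin n → ℤ | wt n I ≠ k} := by
      rw [H0_eq, W, Submodule.span_mul_span]
      apply Submodule.span_le.2
      rintro x hx
      obtain ⟨g, hg, w, hw, rfl⟩ := Set.mem_mul.1 hx
      obtain ⟨J, S, hm, hS, hsub, rfl⟩ := hg
      obtain ⟨i, hi0, rfl⟩ := hw
      rw [v_def', single_mul_single', add_zero]
      apply single_mem_supported' n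
      show wt n J ≠ k
      have hcard : wt n J ≤ k - 1 := hS ▸ Finset.card_le_card hsub
      omega
    have h2 : (⨆ I ∈ Slevel n k, Submodule.span ℂ {chiVI n I})
        ≤ AddMonoidAlgebra.supported ℂ (ExteriorAlgebra ℂ (Fin n → ℂ)) {I : Fin n → ℤ | wt n I = k} :=
      iSup₂_le fun I hI => Submodule.span_le.2 (Set.singleton_subset_iff.2 (by
        rw [chiVI_eq]
        exact single_mem_supported' n _ hI.2))
    exact (disjoint_supported_supported' n
      (Set.disjoint_left.2 (by intro I h1 h2; exact h1 h2))).mono h1 h2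
  · -- independence
    intro i
    have h1 : Submodule.span ℂ {chiVI n (i : Fin n → ℤ)}
        ≤ AddMonoidAlgebra.supported ℂ (ExteriorAlgebra ℂ (Fin n → ℂ)) {(i : Fin n → ℤ)} :=
      Submodule.span_le.2 (Set.singleton_subset_iff.2 (by
        rw [chiVI_eq]
        exact single_mem_supported' n _ rfl))
    have h2 : (⨆ (j : Slevel n k) (_ : j ≠ i), Submodule.span ℂ {chiVI n (j : Fin n → ℤ)})
        ≤ AddMonoidAlgebra.supported ℂ (ExteriorAlgebra ℂ (Fin n → ℂ)) {(i : Fin n → ℤ)}ᶜ :=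
      iSup₂_le fun j hj => Submodule.span_le.2 (Set.singleton_subset_iff.2 (by
        rw [chiVI_eq]
        exact single_mem_supported' n _ fun h => hj (Subtype.ext h)))
    exact (disjoint_supported_supported' n disjoint_compl_right).mono h1 h2

end CPn
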